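/- For every positive integer d, every α ∈ (0,1], every set S ⊆ ℝ^d, and every finite indexed family B_1, …, B_n of axis-parallel boxes in ℝ^d with n ≥ 2d, if the number of 2d-element index sets J ⊆ {1,…,n} with S ∩ ⋂_{j∈J} B_j ≠ ∅ is at least α·C(n,2d), then there exists J ⊆ {1,…,n} with |J| ≥ (1 − (1−α)^{1/(2d)})·n and S ∩ ⋂_{j∈J} B_j ≠ ∅. -/

import Mathlib

open Finset

section Counting

set_option linter.unusedSectionVars false

variable {α β : Type*} [DecidableEq α] [LinearOrder β]

/-- The "upward closure" of `J` inside `V` w.r.t. weight functions `w`. -/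
def Uset {k : ℕ} (V : Finset α) (w : Fin k → α → β) (J : Finset α) : Finset α :=
  V.filter (fun y => ∀ i, ∃ x ∈ J, w i x ≤ w i y)

lemma hockey (k m : ℕ) (hk : 1 ≤ k) :
    ∀ N, ∑ t ∈ Finset.range N, ((t + k) - m).choose k = ((N + k) - m).choose (k + 1) := by
  intro N
  induction N with
  | zero =>
      simp [Nat.choose_eq_zero_of_lt (show k - m < k + 1 by omega)]
  | succ N ih =>
      rw [Finset.sum_range_succ, ih]
      rcases le_or_gt m (N + k) with h | h
      · have h1 : (N + 1 + k) - m = ((N + k) - m) + 1 := by omega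
        rw [h1, Nat.choose_succ_succ]
        exact Nat.add_comm _ _
      · have h1 : (N + k) - m = 0 := by omega
        have h2 : (N + 1 + k) - m ≤ 1 := by omega
        rw [h1]
        rw [Nat.choose_eq_zero_of_lt (show 0 < k + 1 by omega),
          Nat.choose_eq_zero_of_lt (by omega : 0 < k),
          Nat.choose_eq_zero_of_lt (show (N + 1 + k) - m < k + 1 by omega)]

lemma descfac_ineq : ∀ (K m n : ℕ), m ≤ n →
    (n - m) ^ K * n.descFactorial K ≤ n ^ K * ((n + K - 1) - m).descFactorial K := by
  intro K
  induction K with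
  | zero => simp
  | succ K ih =>
      intro m n hmn
      rcases eq_or_lt_of_le hmn with rfl | hlt
      · simp
      · have h1 : (n + (K + 1) - 1) - m = (n + K - 1 - m) + 1 := by omega
        rw [Nat.descFactorial_succ, h1, Nat.descFactorial_succ]
        have h2 : ((n + K - 1 - m) + 1) - K = n - m + (n + K - 1 - m + 1 - K - (n - m)) := by omega
        calc (n - m) ^ (K + 1) * ((n - K) * n.descFactorial K)
            = (n - m) * ((n - K) * ((n - m) ^ K * n.descFactorial K)) := by ring
          _ ≤ (n - m) * ((n - K) * (n ^ K * ((n + K - 1) - m).descFactorial K)) := by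
              exact Nat.mul_le_mul_left _ (Nat.mul_le_mul_left _ (ih m n hmn))
          _ ≤ (n - m) * (n * (n ^ K * ((n + K - 1 - m) + 1).descFactorial K)) := by
              refine Nat.mul_le_mul_left _ (Nat.mul_le_mul (Nat.sub_le n K)
                (Nat.mul_le_mul_left _ (Nat.descFactorial_le K (Nat.le_succ _))))
          _ = n ^ (K + 1) * ((((n + K - 1 - m) + 1) - K) * ((n + K - 1 - m) + 1).descFactorial K) := by
              rw [show ((n + K - 1 - m) + 1) - K = n - m by omega]; ring

lemma card_above_strict_lt (V : Finset α) (u : α → β) {x y : α} (hy : y ∈ V) (hxy : u x < u y) :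
    (V.filter fun z => u y < u z).card < (V.filter fun z => u x < u z).card := by
  apply Finset.card_lt_card
  rw [Finset.ssubset_iff_of_subset]
  · exact ⟨y, Finset.mem_filter.2 ⟨hy, hxy⟩, fun hmem => lt_irrefl _ (Finset.mem_filter.1 hmem).2⟩
  · intro z hz
    rw [Finset.mem_filter] at hz ⊢
    exact ⟨hz.1, hxy.trans hz.2⟩

lemma injOn_card_above (V : Finset α) (u : α → β) (hu : Set.InjOn u ↑V) :
    Set.InjOn (fun x => (V.filter fun z => u x < u z).card) ↑V := by
  intro x hx y hy hxy
  by_contra hne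
  rcases lt_trichotomy (u x) (u y) with h | h | h
  · exact absurd hxy (by simpa using (card_above_strict_lt V u hy h).ne')
  · exact hne (hu hx hy h)
  · exact absurd hxy (by simpa using (card_above_strict_lt V u hx h).ne)

lemma image_card_above (V : Finset α) (u : α → β) (hu : Set.InjOn u ↑V) :
    V.image (fun x => (V.filter fun z => u x < u z).card) = Finset.range V.card := by
  apply Finset.eq_of_subset_of_card_le
  · intro t ht
    rw [Finset.mem_image] at ht
    obtain ⟨x, hx, rfl⟩ := ht
    rw [Finset.mem_range]
    calc (V.filter fun z => u x < u z).card
        ≤ (V.erase x).card := by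
          apply Finset.card_le_card
          intro z hz
          rw [Finset.mem_filter] at hz
          exact Finset.mem_erase.2 ⟨fun h => lt_irrefl _ (h ▸ hz.2), hz.1⟩
      _ < V.card := Finset.card_erase_lt_of_mem hx
  · rw [Finset.card_range, Finset.card_image_of_injOn (injOn_card_above V u hu)]


lemma counting : ∀ (k m : ℕ), k ≤ m → ∀ (V : Finset α) (w : Fin (k+1) → α → β),
    (∀ i, Set.InjOn (w i) ↑V) →
    ((V.card + k) - m).choose (k+1) ≤
      ((V.powersetCard (k+1)).filter (fun J => m + 1 ≤ (Uset V w J).card)).card := by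
  intro k
  induction k with
  | zero =>
      intro m _ V w hw
      set u := w 0 with hu
      set c : α → ℕ := fun x => (V.filter fun z => u x < u z).card with hc
      set T := V.filter (fun x => m ≤ c x) with hT
      have hTcard : T.card = V.card - m := by
        have h1 : T.image c = (Finset.range V.card).filter (fun t => m ≤ t) := by
          apply Finset.Subset.antisymm
          · intro t ht
            rw [Finset.mem_image] at ht; obtain ⟨x, hx, rfl⟩ := ht
            rw [hT, Finset.mem_filter] at hx
            rw [Finset.mem_filter]
            refine ⟨?_, hx.2⟩
            rw [← image_card_above V u (hw 0)]
            exact Finset.mem_image_of_mem c hx.1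
          · intro t ht
            rw [Finset.mem_filter] at ht
            have h2 := ht.1
            rw [← image_card_above V u (hw 0), Finset.mem_image] at h2
            obtain ⟨x, hx, rfl⟩ := h2
            exact Finset.mem_image_of_mem c (Finset.mem_filter.2 ⟨hx, ht.2⟩)
        have h2 : T.card = (T.image c).card := by
          rw [Finset.card_image_of_injOn ((injOn_card_above V u (hw 0)).mono
            (Finset.coe_subset.2 (Finset.filter_subset _ _)))]
        rw [h2, h1]
        have h3 : (Finset.range V.card).filter (fun t => m ≤ t) = Finset.Ico m V.card := by
          ext t; simp [Finset.mem_range, Finset.mem_Ico]; omega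
        rw [h3, Nat.card_Ico]
      have hsub : T.image (fun x => ({x} : Finset α)) ⊆
          ((V.powersetCard (0+1)).filter (fun J => m + 1 ≤ (Uset V w J).card)) := by
        intro J hJ
        rw [Finset.mem_image] at hJ
        obtain ⟨x, hx, rfl⟩ := hJ
        rw [hT, Finset.mem_filter] at hx
        refine Finset.mem_filter.2 ⟨Finset.mem_powersetCard.2
          ⟨Finset.singleton_subset_iff.2 hx.1, Finset.card_singleton x⟩, ?_⟩
        have hss : insert x (V.filter fun z => u x < u z) ⊆ Uset V w {x} := by
          intro z hz
          rw [Finset.mem_insert] at hz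
          rcases hz with rfl | hz
          · exact Finset.mem_filter.2 ⟨hx.1, fun i => ⟨z, Finset.mem_singleton_self z, le_refl _⟩⟩
          · rw [Finset.mem_filter] at hz
            refine Finset.mem_filter.2 ⟨hz.1, fun i => ?_⟩
            have hi : i = 0 := Fin.ext (by omega)
            exact ⟨x, Finset.mem_singleton_self x, by rw [hi, ← hu]; exact le_of_lt hz.2⟩
        have hni : x ∉ (V.filter fun z => u x < u z) := by
          intro h; exact lt_irrefl _ (Finset.mem_filter.1 h).2
        calc m + 1 ≤ c x + 1 := by omega
          _ = (insert x (V.filter fun z => u x < u z)).card :=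
              (Finset.card_insert_of_notMem hni).symm
          _ ≤ (Uset V w {x}).card := Finset.card_le_card hss
      calc ((V.card + 0) - m).choose (0+1) = V.card - m := by
            rw [Nat.add_zero, Nat.choose_one_right]
        _ = T.card := hTcard.symm
        _ = (T.image (fun x => ({x} : Finset α))).card := by
            rw [Finset.card_image_of_injOn (fun a _ b _ h => Finset.singleton_injective h)]
        _ ≤ _ := Finset.card_le_card hsub
  | succ k ih =>
      intro m hm V w hw
      set u := w (Fin.last (k+1)) with hu
      set Vx : α → Finset α := fun x => V.filter fun z => u x < u z with hVx
      set c : α → ℕ := fun x => (Vx x).card with hc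
      set w' : Fin (k+1) → α → β := fun i => w i.castSucc with hw'
      set badx : α → Finset (Finset α) := fun x =>
        ((Vx x).powersetCard (k+1)).filter (fun K => (m-1) + 1 ≤ (Uset (Vx x) w' K).card)
        with hbadx
      set BAD := ((V.powersetCard (k+1+1)).filter (fun J => m + 1 ≤ (Uset V w J).card)) with hBAD
      have hxV : ∀ x, x ∉ Vx x := fun x h => lt_irrefl _ (Finset.mem_filter.1 h).2
      have hKx : ∀ x, ∀ K ∈ badx x, x ∉ K ∧ K ⊆ Vx x ∧ K.card = k+1 := by
        intro x K hK
        rw [hbadx, Finset.mem_filter, Finset.mem_powersetCard] at hK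
        exact ⟨fun h => hxV x (hK.1.1 h), hK.1.1, hK.1.2⟩
      have hins : ∀ x ∈ V, ∀ K ∈ badx x, insert x K ∈ BAD := by
        intro x hx K hK
        obtain ⟨hxK, hKV, hKcard⟩ := hKx x K hK
        have hKbad : (m-1) + 1 ≤ (Uset (Vx x) w' K).card := (Finset.mem_filter.1 hK).2
        have hsub : insert x (Uset (Vx x) w' K) ⊆ Uset V w (insert x K) := by
          intro z hz
          rw [Finset.mem_insert] at hz
          rcases hz with rfl | hz
          · exact Finset.mem_filter.2 ⟨hx, fun i => ⟨z, Finset.mem_insert_self _ _, le_refl _⟩⟩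
          · rw [Uset, Finset.mem_filter] at hz
            obtain ⟨hzV, hzU⟩ := hz
            have hzV' : z ∈ V := (Finset.filter_subset _ _) hzV
            refine Finset.mem_filter.2 ⟨hzV', fun i => ?_⟩
            refine Fin.lastCases ?_ ?_ i
            · exact ⟨x, Finset.mem_insert_self _ _, le_of_lt (Finset.mem_filter.1 hzV).2⟩
            · intro j
              obtain ⟨y, hyK, hy⟩ := hzU j
              exact ⟨y, Finset.mem_insert_of_mem hyK, hy⟩
        have h1 : x ∉ Uset (Vx x) w' K := fun h => hxV x ((Finset.filter_subset _ _) h)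
        have hcardU : m + 1 ≤ (Uset V w (insert x K)).card := by
          have h2 : (insert x (Uset (Vx x) w' K)).card = (Uset (Vx x) w' K).card + 1 :=
            Finset.card_insert_of_notMem h1
          have h3 := Finset.card_le_card hsub
          omega
        refine Finset.mem_filter.2 ⟨Finset.mem_powersetCard.2 ⟨?_, ?_⟩, hcardU⟩
        · exact Finset.insert_subset hx (hKV.trans (Finset.filter_subset _ _))
        · rw [Finset.card_insert_of_notMem hxK, hKcard]
      have hdisj : ∀ x ∈ V, ∀ y ∈ V, x ≠ y →
          Disjoint ((badx x).image (insert x)) ((badx y).image (insert y)) := by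
        intro x _ y _ hxy
        rw [Finset.disjoint_left]
        intro J hJx hJy
        rw [Finset.mem_image] at hJx hJy
        obtain ⟨K, hK, rfl⟩ := hJx
        obtain ⟨K', hK', hKK'⟩ := hJy
        obtain ⟨hxK, hKV, -⟩ := hKx x K hK
        obtain ⟨hyK', hK'V, -⟩ := hKx y K' hK'
        have hyJ : y ∈ insert x K := by rw [← hKK']; exact Finset.mem_insert_self y K'
        have hxJ : x ∈ insert y K' := by rw [hKK']; exact Finset.mem_insert_self x K
        rw [Finset.mem_insert] at hyJ hxJ
        rcases hyJ with rfl | hyJ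
        · exact hxy rfl
        rcases hxJ with rfl | hxJ
        · exact hxy rfl
        have h1 : u x < u y := (Finset.mem_filter.1 (hKV hyJ)).2
        have h2 : u y < u x := (Finset.mem_filter.1 (hK'V hxJ)).2
        exact absurd h1 (asymm h2)
      have hsum : ∀ x ∈ V, ((c x + (k+1)) - m).choose (k+1) ≤ ((badx x).image (insert x)).card := by
        intro x hx
        have hinj : Set.InjOn (insert x) (↑(badx x) : Set (Finset α)) := by
          intro K hK K' hK' he
          have h1 : x ∉ K := (hKx x K (Finset.mem_coe.1 hK)).1
          have h2 : x ∉ K' := (hKx x K' (Finset.mem_coe.1 hK')).1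
          rw [← Finset.erase_insert h1, ← Finset.erase_insert h2, he]
        rw [Finset.card_image_of_injOn hinj]
        have hIH := ih (m-1) (by omega) (Vx x) w'
          (fun i => (hw i.castSucc).mono (Finset.coe_subset.2 (Finset.filter_subset _ _)))
        have heq : ((Vx x).card + k) - (m-1) = (c x + (k+1)) - m := by
          simp only [hc]
          omega
        rw [← heq]
        exact hIH
      calc ((V.card + (k+1)) - m).choose (k+1+1)
          = ∑ t ∈ Finset.range V.card, ((t + (k+1)) - m).choose (k+1) :=
            (hockey (k+1) m (by omega) V.card).symm
        _ = ∑ x ∈ V, ((c x + (k+1)) - m).choose (k+1) := by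
            rw [← image_card_above V u (hw (Fin.last (k+1))),
              Finset.sum_image (fun x hx y hy h => injOn_card_above V u (hw _) hx hy h)]
        _ ≤ ∑ x ∈ V, ((badx x).image (insert x)).card := Finset.sum_le_sum hsum
        _ = (V.biUnion (fun x => (badx x).image (insert x))).card :=
            (Finset.card_biUnion hdisj).symm
        _ ≤ BAD.card := by
            refine Finset.card_le_card (Finset.biUnion_subset.2 (fun x hx => ?_))
            intro J hJ
            rw [Finset.mem_image] at hJ
            obtain ⟨K, hK, rfl⟩ := hJ
            exact hins x hx K hK

end Counting

/-- An axis-parallel box in `ℝ^d`: a product of closed intervals `[aᵢ, bᵢ]` with `aᵢ ≤ bᵢ`. -/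
def IsBox {d : ℕ} (B : Set (Fin d → ℝ)) : Prop :=
  ∃ a b : Fin d → ℝ, (∀ i, a i ≤ b i) ∧ B = Set.Icc a b

theorem fractional_S_helly_for_2d_tuples (d : ℕ) (hd : 0 < d) (α : ℝ)
    (hα : α ∈ Set.Ioc (0 : ℝ) 1) (S : Set (Fin d → ℝ)) (n : ℕ) (hn : 2 * d ≤ n)
    (B : Fin n → Set (Fin d → ℝ)) (hB : ∀ j, IsBox (B j))
    (hcount : α * (n.choose (2 * d) : ℕ) ≤
      ({J : Finset (Fin n) | J.card = 2 * d ∧ (S ∩ ⋂ j ∈ J, B j).Nonempty}.ncard : ℕ)) :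
    ∃ J : Finset (Fin n),
      (1 - (1 - α) ^ ((1 : ℝ) / (2 * d))) * n ≤ (J.card : ℝ) ∧
      (S ∩ ⋂ j ∈ J, B j).Nonempty := by
  classical
  obtain ⟨hα0, hα1⟩ := hα
  choose a b hab hBeq using hB
  obtain ⟨k, hk2d⟩ : ∃ k, 2 * d = k + 1 := ⟨2 * d - 1, by omega⟩
  have hdk : d ≤ k + 1 := by omega
  -- the 2d weight functions, with tie-breaking by index
  set g : Fin (k+1) → Fin n → ℝ := fun i j =>
    if h : (i : ℕ) < d then -(a j ⟨(i : ℕ), h⟩) else b j ⟨(i : ℕ) - d, by have := i.isLt; omega⟩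
    with hg
  set w : Fin (k+1) → Fin n → ℝ ×ₗ (Fin n) := fun i j => toLex (g i j, j) with hw
  have hwinj : ∀ i, Set.InjOn (w i) ↑(Finset.univ : Finset (Fin n)) := by
    intro i x _ y _ hxy
    have h1 : ((g i x, x) : ℝ × Fin n) = (g i y, y) := by
      simpa [hw] using hxy
    exact (Prod.mk.injEq _ _ _ _ ▸ h1).2
  have hglow : ∀ (c : Fin d) (j : Fin n),
      g ⟨(c : ℕ), lt_of_lt_of_le c.2 hdk⟩ j = -(a j c) := by
    intro c j
    simp only [hg]
    rw [dif_pos c.2]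
  have hghigh : ∀ (c : Fin d) (j : Fin n),
      g ⟨d + (c : ℕ), by omega⟩ j = b j c := by
    intro c j
    simp only [hg]
    rw [dif_neg (Nat.not_lt.2 (Nat.le_add_right d (c : ℕ)) :
      ¬ ((⟨d + (c : ℕ), by omega⟩ : Fin (k+1)) : ℕ) < d)]
    congr 1
    exact Fin.ext (by simp)
  -- the upward closure of a good family is good
  have hUgood : ∀ J : Finset (Fin n), (S ∩ ⋂ j ∈ J, B j).Nonempty →
      (S ∩ ⋂ j ∈ (Uset Finset.univ w J), B j).Nonempty := by
    rintro J ⟨p, hpS, hpB⟩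
    refine ⟨p, hpS, Set.mem_iInter₂.2 (fun y hy => ?_)⟩
    have hyU : ∀ i, ∃ x ∈ J, w i x ≤ w i y := by
      simp only [Uset, Finset.mem_filter] at hy; exact hy.2
    have hpmem : ∀ x ∈ J, a x ≤ p ∧ p ≤ b x := by
      intro x hx
      have := Set.mem_iInter₂.1 hpB x hx
      rw [hBeq x] at this
      exact this
    rw [hBeq y, Set.mem_Icc]
    constructor
    · intro c
      obtain ⟨x, hxJ, hle⟩ := hyU ⟨(c : ℕ), lt_of_lt_of_le c.2 hdk⟩
      have hfst : g ⟨(c : ℕ), lt_of_lt_of_le c.2 hdk⟩ x ≤ g ⟨(c : ℕ), lt_of_lt_of_le c.2 hdk⟩ y := by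
        have := Prod.Lex.monotone_fst _ _ hle
        simpa [hw] using this
      rw [hglow c x, hglow c y] at hfst
      have := (hpmem x hxJ).1 c
      linarith [neg_le_neg_iff.1 hfst]
    · intro c
      obtain ⟨x, hxJ, hle⟩ := hyU ⟨d + (c : ℕ), by omega⟩
      have hfst : g ⟨d + (c : ℕ), by omega⟩ x ≤ g ⟨d + (c : ℕ), by omega⟩ y := by
        have := Prod.Lex.monotone_fst _ _ hle
        simpa [hw] using this
      rw [hghigh c x, hghigh c y] at hfst
      have := (hpmem x hxJ).2 c
      linarith
  -- counting setup
  have hCpos : (0 : ℝ) < (n.choose (2 * d) : ℕ) := by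
    exact_mod_cast Nat.choose_pos hn
  have hset : {J : Finset (Fin n) | J.card = 2 * d ∧ (S ∩ ⋂ j ∈ J, B j).Nonempty}
      = ↑(Finset.univ.filter
          (fun J : Finset (Fin n) => J.card = 2 * d ∧ (S ∩ ⋂ j ∈ J, B j).Nonempty)) := by
    ext J; simp
  rw [hset, Set.ncard_coe_finset] at hcount
  -- a good 2d-set exists
  have hEx : ∃ J₀ : Finset (Fin n), J₀.card = 2 * d ∧ (S ∩ ⋂ j ∈ J₀, B j).Nonempty := by
    by_contra hne
    push_neg at hne
    have : Finset.univ.filter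
        (fun J : Finset (Fin n) => J.card = 2 * d ∧ (S ∩ ⋂ j ∈ J, B j).Nonempty) = ∅ := by
      apply Finset.filter_eq_empty_iff.2
      intro J _ hJ
      obtain ⟨h1, h2⟩ := hJ
      rw [hne J h1] at h2
      exact Set.not_nonempty_empty h2
    rw [this] at hcount
    simp at hcount
    nlinarith
  obtain ⟨J₀, hJ₀card, hJ₀good⟩ := hEx
  -- maximal good set
  set 𝒢 : Finset (Finset (Fin n)) :=
    Finset.univ.filter (fun J : Finset (Fin n) => (S ∩ ⋂ j ∈ J, B j).Nonempty) with h𝒢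
  have h𝒢ne : 𝒢.Nonempty := ⟨J₀, by simp [h𝒢, hJ₀good]⟩
  obtain ⟨Jm, hJm𝒢, hJmmax⟩ := Finset.exists_max_image 𝒢 Finset.card h𝒢ne
  set m := Jm.card with hm
  have hJmgood : (S ∩ ⋂ j ∈ Jm, B j).Nonempty := by
    have := Finset.mem_filter.1 hJm𝒢
    exact this.2
  have hmax : ∀ J : Finset (Fin n), (S ∩ ⋂ j ∈ J, B j).Nonempty → J.card ≤ m := by
    intro J hJ
    exact hJmmax J (Finset.mem_filter.2 ⟨Finset.mem_univ J, hJ⟩)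
  have hm2d : 2 * d ≤ m := hJ₀card ▸ hmax J₀ hJ₀good
  have hmn : m ≤ n := by
    have := Finset.card_le_univ Jm
    simpa using this
  -- the good/bad split of 2d-subsets
  set goodF := (Finset.univ.powersetCard (2 * d)).filter
    (fun J : Finset (Fin n) => (S ∩ ⋂ j ∈ J, B j).Nonempty) with hgoodF
  set badF := (Finset.univ.powersetCard (2 * d)).filter
    (fun J : Finset (Fin n) => ¬ (S ∩ ⋂ j ∈ J, B j).Nonempty) with hbadF
  have hsplit : goodF.card + badF.card = n.choose (2 * d) := by
    rw [hgoodF, hbadF, Finset.card_filter_add_card_filter_not,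
      Finset.card_powersetCard]
    simp
  have hgoodcard : Finset.univ.filter
      (fun J : Finset (Fin n) => J.card = 2 * d ∧ (S ∩ ⋂ j ∈ J, B j).Nonempty) = goodF := by
    ext J
    simp [hgoodF, Finset.mem_powersetCard_univ]
  rw [hgoodcard] at hcount
  -- the counting lemma bounds badF from below
  have hcnt := counting k m (by omega) (Finset.univ : Finset (Fin n)) w hwinj
  have hbadcnt : ((n + k) - m).choose (k + 1) ≤ badF.card := by
    have hcard_univ : (Finset.univ : Finset (Fin n)).card = n := by simp
    rw [hcard_univ] at hcnt
    refine le_trans hcnt (Finset.card_le_card ?_)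
    intro J hJ
    obtain ⟨hJp, hJU⟩ := Finset.mem_filter.1 hJ
    refine Finset.mem_filter.2 ⟨?_, ?_⟩
    · rw [hbadF] at *
      rw [Finset.mem_powersetCard_univ] at hJp ⊢
      omega
    · intro hgood
      have h1 := hmax _ (hUgood J hgood)
      omega
  -- transfer to real arithmetic
  have hnat : (n - m) ^ (2 * d) * n.choose (2 * d) ≤
      n ^ (2 * d) * ((n + k) - m).choose (k + 1) := by
    have h1 := descfac_ineq (2 * d) m n hmn
    rw [Nat.descFactorial_eq_factorial_mul_choose, Nat.descFactorial_eq_factorial_mul_choose] at h1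
    have h2 : n + 2 * d - 1 - m = (n + k) - m := by omega
    rw [h2, hk2d] at h1
    rw [hk2d]
    have h3 := Nat.factorial_pos (k + 1)
    have h4 : (Nat.factorial (k+1)) * ((n - m) ^ (k+1) * n.choose (k+1)) ≤
        (Nat.factorial (k+1)) * (n ^ (k+1) * ((n + k) - m).choose (k+1)) := by
      calc (Nat.factorial (k+1)) * ((n - m) ^ (k+1) * n.choose (k+1))
          = (n - m) ^ (k+1) * (Nat.factorial (k+1) * n.choose (k+1)) := by ring
        _ ≤ n ^ (k+1) * (Nat.factorial (k+1) * ((n + k) - m).choose (k+1)) := h1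
        _ = (Nat.factorial (k+1)) * (n ^ (k+1) * ((n + k) - m).choose (k+1)) := by ring
    exact Nat.le_of_mul_le_mul_left h4 h3
  have hd0 : (0:ℝ) < (n:ℝ) := by
    have : 0 < n := by omega
    exact_mod_cast this
  -- Cb ≤ (1-α) * C
  have hCb : (((n + k) - m).choose (k + 1) : ℝ) ≤ (1 - α) * (n.choose (2 * d) : ℕ) := by
    have h1 : (badF.card : ℝ) = (n.choose (2*d) : ℕ) - goodF.card := by
      have := hsplit
      push_cast [← this]
      ring
    have h2 : (((n + k) - m).choose (k + 1) : ℝ) ≤ (badF.card : ℝ) := by exact_mod_cast hbadcnt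
    rw [h1] at h2
    linarith
  -- ((n-m)/n)^(2d) ≤ 1 - α
  have hq : (((n : ℝ) - m) / n) ^ (2 * d) ≤ 1 - α := by
    have h1 : ((n:ℝ) - m) ^ (2*d) * (n.choose (2*d) : ℕ) ≤
        (n:ℝ) ^ (2*d) * ((1 - α) * (n.choose (2*d) : ℕ)) := by
      have h2 : ((n:ℝ) - m) ^ (2*d) * (n.choose (2*d) : ℕ) ≤
          (n:ℝ) ^ (2*d) * (((n + k) - m).choose (k + 1) : ℕ) := by
        have := hnat
        have hc : ((n - m : ℕ) : ℝ) = (n:ℝ) - m := by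
          push_cast [Nat.cast_sub hmn]; ring
        calc ((n:ℝ) - m) ^ (2*d) * (n.choose (2*d) : ℕ)
            = (((n - m) ^ (2 * d) * n.choose (2 * d) : ℕ) : ℝ) := by push_cast [← hc]; ring
          _ ≤ ((n ^ (2 * d) * ((n + k) - m).choose (k + 1) : ℕ) : ℝ) := by exact_mod_cast this
          _ = (n:ℝ) ^ (2*d) * (((n + k) - m).choose (k + 1) : ℕ) := by push_cast; ring
      refine le_trans h2 ?_
      have hpow : (0:ℝ) ≤ (n:ℝ)^(2*d) := by positivity
      exact mul_le_mul_of_nonneg_left hCb hpow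
    rw [div_pow]
    rw [div_le_iff₀ (by positivity)]
    calc ((n:ℝ) - m) ^ (2*d)
        ≤ (n:ℝ) ^ (2*d) * (1 - α) := by
          have := (mul_le_mul_iff_of_pos_right hCpos).1 (by linarith [h1] : ((n:ℝ) - m) ^ (2*d) * (n.choose (2*d) : ℕ) ≤ ((n:ℝ)^(2*d) * (1-α)) * (n.choose (2*d) : ℕ))
          linarith
      _ = (1 - α) * (n:ℝ) ^ (2*d) := by ring
  -- rpow step
  have hq0 : (0:ℝ) ≤ ((n:ℝ) - m) / n := by
    apply div_nonneg _ hd0.le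
    have : (m:ℝ) ≤ n := by exact_mod_cast hmn
    linarith
  have h2d0 : (0:ℝ) < 2 * (d:ℝ) := by
    have : (0:ℝ) < (d:ℝ) := by exact_mod_cast hd
    linarith
  have hkey : ((n:ℝ) - m) / n ≤ (1 - α) ^ ((1:ℝ) / (2 * d)) := by
    have h1 : ((((n:ℝ) - m) / n) ^ (2*d)) ^ ((1:ℝ) / (2 * (d:ℝ))) ≤
        (1 - α) ^ ((1:ℝ) / (2 * (d:ℝ))) :=
      Real.rpow_le_rpow (by positivity) hq (by positivity)
    have h2 : ((((n:ℝ) - m) / n) ^ (2*d)) ^ ((1:ℝ) / (2 * (d:ℝ))) = ((n:ℝ) - m) / n := by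
      rw [← Real.rpow_natCast (((n:ℝ) - m) / n) (2*d), ← Real.rpow_mul hq0]
      rw [show (((2*d : ℕ) : ℝ) * ((1:ℝ) / (2 * (d:ℝ)))) = 1 by
        push_cast; field_simp]
      exact Real.rpow_one _
    rwa [h2] at h1
  refine ⟨Jm, ?_, hJmgood⟩
  have hfinal : 1 - (1 - α) ^ ((1:ℝ) / (2 * (d:ℝ))) ≤ 1 - ((n:ℝ) - m) / n := by linarith
  calc (1 - (1 - α) ^ ((1:ℝ) / (2 * (d:ℝ)))) * n
      ≤ (1 - ((n:ℝ) - m) / n) * n := mul_le_mul_of_nonneg_right hfinal hd0.le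
    _ = (m : ℝ) := by field_simp; ring
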